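/- Let p₁, q₁ ∈ [1/2, 1) and define λ = p₁q₁ / (p₁q₁ + (1-p₁)(1-q₁)). Then λ ≥ 1/2 and h₂(λ) ≤ -4(1-p₁)(1-q₁) log₂((1-p₁)(1-q₁)). -/

import Mathlib

/-- The binary entropy function (base 2). -/
noncomputable def binEnt (x : ℝ) : ℝ :=
  -(x * Real.logb 2 x) - (1 - x) * Real.logb 2 (1 - x)

/-- Let `p₁, q₁ ∈ [1/2, 1)` and `λ = p₁q₁ / (p₁q₁ + (1-p₁)(1-q₁))`. Then `λ ≥ 1/2` and
`h₂(λ) ≤ -4(1-p₁)(1-q₁) log₂((1-p₁)(1-q₁))`. -/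
theorem binEnt_lambda_bound (p₁ q₁ : ℝ) (hp : p₁ ∈ Set.Ico (1/2 : ℝ) 1)
    (hq : q₁ ∈ Set.Ico (1/2 : ℝ) 1) :
    1/2 ≤ p₁ * q₁ / (p₁ * q₁ + (1 - p₁) * (1 - q₁)) ∧
      binEnt (p₁ * q₁ / (p₁ * q₁ + (1 - p₁) * (1 - q₁)))
        ≤ -(4 * ((1 - p₁) * (1 - q₁)) * Real.logb 2 ((1 - p₁) * (1 - q₁))) := by
  obtain ⟨hp1, hp2⟩ := hp
  obtain ⟨hq1, hq2⟩ := hq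
  set a := p₁ * q₁ with ha
  set b := (1 - p₁) * (1 - q₁) with hb
  have hb0 : 0 < b := mul_pos (by linarith) (by linarith)
  have hb4 : b ≤ 1/4 := by nlinarith
  have hs1 : (1:ℝ)/2 ≤ a + b := by nlinarith
  have hs2 : a + b ≤ 1 := by nlinarith
  have hba : b ≤ a := by nlinarith
  have hs0 : 0 < a + b := by linarith
  have hL : a / (a + b) = 1 - b / (a + b) := by field_simp; ring
  have ht0 : 0 < b / (a + b) := div_pos hb0 hs0
  have ht2b : b / (a + b) ≤ 2 * b := by
    rw [div_le_iff₀ hs0]; nlinarith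
  have hlog2 : 0 < Real.log 2 := Real.log_pos (by norm_num)
  have hlogb : Real.log b ≤ -1 := by
    have h1 : Real.log b ≤ Real.log (1/4) := Real.log_le_log hb0 hb4
    have h2 : Real.log (1/4 : ℝ) = -(2 * Real.log 2) := by
      rw [show (1:ℝ)/4 = (2:ℝ)⁻¹ ^ 2 by norm_num, Real.log_pow, Real.log_inv]
      push_cast; ring
    have := Real.log_two_gt_d9
    linarith
  refine ⟨?_, ?_⟩
  · rw [le_div_iff₀ hs0]; linarith
  · set t := b / (a + b) with htdef
    have htle : t ≤ 1/2 := le_trans ht2b (by linarith)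
    have hL1 : 0 < 1 - t := by linarith
    have hA : -(t * Real.log t) ≤ 2 * b * (-Real.log b) := by
      have hlt : Real.log t = Real.log b - Real.log (a + b) := Real.log_div hb0.ne' hs0.ne'
      have hls : Real.log (a + b) ≤ 0 := Real.log_nonpos (by linarith) hs2
      have hlb : Real.log b ≤ 0 := by linarith
      nlinarith [mul_nonneg ht0.le (neg_nonneg.2 hls)]
    have hB : -((1 - t) * Real.log (1 - t)) ≤ 2 * b * (-Real.log b) := by
      have h1 : Real.log (1 - t)⁻¹ ≤ (1 - t)⁻¹ - 1 := Real.log_le_sub_one_of_pos (by positivity)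
      rw [Real.log_inv] at h1
      have h3 := mul_le_mul_of_nonneg_left h1 hL1.le
      rw [mul_sub, mul_inv_cancel₀ hL1.ne'] at h3
      nlinarith
    rw [binEnt, hL, show (1 - (1 - t)) = t by ring, Real.logb, Real.logb, Real.logb]
    have hsum : -((1 - t) * Real.log (1 - t)) - t * Real.log t ≤ -(4 * b * Real.log b) := by
      nlinarith
    calc -((1 - t) * (Real.log (1 - t) / Real.log 2)) - t * (Real.log t / Real.log 2)
        = (-((1 - t) * Real.log (1 - t)) - t * Real.log t) / Real.log 2 := by ring
      _ ≤ (-(4 * b * Real.log b)) / Real.log 2 := by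
          exact (div_le_div_iff_of_pos_right hlog2).mpr hsum
      _ = -(4 * b * (Real.log b / Real.log 2)) := by ring
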